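/- arXiv:2004.06834 — 2 statements merged into one kernel-verified Lean document; each statement's English description precedes it below -/
import Mathlib

section
/- Fix n ≥ 1 and N = 2^n. Define the Clifford hierarchy on n qubits by C^{(1)} = { i^κ · E(a,b) : κ ∈ {0,1,2,3}, a, b ∈ F₂ⁿ } and, recursively for ℓ ≥ 2, C^{(ℓ)} = { U ∈ U(N) : U E(a,b) U† ∈ C^{(ℓ−1)} for all a, b ∈ F₂ⁿ }, where U(N) is the group of N × N unitary matrices. Then for every ℓ ≥ 1 and every symmetric matrix R ∈ ℤ^{n×n}, the QFD gate τ_R^{(ℓ)} belongs to the ℓ-th level C^{(ℓ)} of the Clifford hierarchy. -/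
open Matrix

noncomputable section

/-- The Hermitian Pauli matrix `E(a,b)` on `n` qubits. -/
def PauliE {n : ℕ} (a b : Fin n → ZMod 2) :
    Matrix (Fin n → ZMod 2) (Fin n → ZMod 2) ℂ :=
  Matrix.of fun u v =>
    Complex.I ^ ((∑ i, (a i).val * (b i).val) % 4) *
      (-1 : ℂ) ^ (∑ i, (v i).val * (b i).val) *
      (if u = v + a then (1 : ℂ) else 0)

/-- `ξ_ℓ = e^{2πi/2^ℓ}`. -/
def xi (ℓ : ℕ) : ℂ := Complex.exp (2 * (Real.pi : ℂ) * Complex.I / (2 ^ ℓ))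

/-- The 0/1 integer representative of a binary vector. -/
def intVec {n : ℕ} (v : Fin n → ZMod 2) : Fin n → ℤ := fun i => ((v i).val : ℤ)

/-- The quadratic form diagonal (QFD) gate `τ_R^{(ℓ)}` with `(v,v)` entry `ξ_ℓ^{v R vᵀ}`. -/
def tauR {n : ℕ} (ℓ : ℕ) (R : Matrix (Fin n) (Fin n) ℤ) :
    Matrix (Fin n → ZMod 2) (Fin n → ZMod 2) ℂ :=
  Matrix.diagonal fun v => xi ℓ ^ (∑ i, intVec v i * Matrix.mulVec R (intVec v) i)

/-- The Clifford hierarchy: level 1 is the Heisenberg-Weyl (Pauli) group, and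
level `ℓ ≥ 2` consists of the unitaries mapping Paulis into level `ℓ − 1` under
conjugation. -/
def CliffLevel (n : ℕ) : ℕ → Set (Matrix (Fin n → ZMod 2) (Fin n → ZMod 2) ℂ)
  | 0 => ∅
  | 1 => {M | ∃ κ : Fin 4, ∃ a b : Fin n → ZMod 2, M = Complex.I ^ (κ : ℕ) • PauliE a b}
  | ℓ + 2 => {U | U ∈ unitary (Matrix (Fin n → ZMod 2) (Fin n → ZMod 2) ℂ) ∧
      ∀ a b : Fin n → ZMod 2, U * PauliE a b * Uᴴ ∈ CliffLevel n (ℓ + 1)}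

-- helpers
section Helpers

variable {n : ℕ}

lemma vadd_self (v a : Fin n → ZMod 2) : v + a + a = v := by
  funext i
  have : ∀ x y : ZMod 2, x + y + y = x := by decide
  exact this (v i) (a i)

/-- integer inner product of 0/1 representatives -/
def ip (a b : Fin n → ZMod 2) : ℕ := ∑ i, (a i).val * (b i).val

def Pm (a : Fin n → ZMod 2) : Matrix (Fin n → ZMod 2) (Fin n → ZMod 2) ℂ :=
  Matrix.of fun u v => if u = v + a then 1 else 0

def Dm (b : Fin n → ZMod 2) : Matrix (Fin n → ZMod 2) (Fin n → ZMod 2) ℂ :=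
  Matrix.diagonal fun v => (-1 : ℂ) ^ ip v b

lemma PauliE_eq (a b : Fin n → ZMod 2) :
    PauliE a b = Complex.I ^ (ip a b % 4) • (Pm a * Dm b) := by
  ext u v
  simp only [PauliE, Pm, Dm, ip, Matrix.smul_apply, Matrix.mul_diagonal, Matrix.of_apply,
    smul_eq_mul]
  by_cases h : u = v + a <;> simp [h] <;> ring

lemma neg_one_pow_congr_zmod {p q : ℕ} (h : (p : ZMod 2) = (q : ZMod 2)) :
    (-1 : ℂ) ^ p = (-1 : ℂ) ^ q := by
  have hpq : p % 2 = q % 2 := (ZMod.natCast_eq_natCast_iff p q 2).mp h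
  conv_lhs => rw [← Nat.div_add_mod p 2]
  conv_rhs => rw [← Nat.div_add_mod q 2]
  rw [pow_add, pow_add, pow_mul, pow_mul, neg_one_sq, one_pow, one_pow, one_mul, one_mul, hpq]

lemma ip_cast_add_right (v b b' : Fin n → ZMod 2) :
    ((ip v (b + b') : ℕ) : ZMod 2) = (ip v b : ℕ) + (ip v b' : ℕ) := by
  simp only [ip, Nat.cast_sum, ← Finset.sum_add_distrib]
  refine Finset.sum_congr rfl fun i _ => ?_
  have : ∀ x y z : ZMod 2, ((x.val * (y + z).val : ℕ) : ZMod 2)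
      = ((x.val * y.val : ℕ) : ZMod 2) + ((x.val * z.val : ℕ) : ZMod 2) := by decide
  exact this (v i) (b i) (b' i)

lemma ip_cast_add_left (v a b : Fin n → ZMod 2) :
    ((ip (v + a) b : ℕ) : ZMod 2) = (ip v b : ℕ) + (ip a b : ℕ) := by
  simp only [ip, Nat.cast_sum, ← Finset.sum_add_distrib]
  refine Finset.sum_congr rfl fun i _ => ?_
  have : ∀ x y z : ZMod 2, (((x + y).val * z.val : ℕ) : ZMod 2)
      = ((x.val * z.val : ℕ) : ZMod 2) + ((y.val * z.val : ℕ) : ZMod 2) := by decide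
  exact this (v i) (a i) (b i)

lemma ip_zero_left (b : Fin n → ZMod 2) : ip (0 : Fin n → ZMod 2) b = 0 := by
  simp [ip]

lemma Pm_zero : Pm (0 : Fin n → ZMod 2) = 1 := by
  ext u v
  simp [Pm, Matrix.one_apply, eq_comm]

lemma Dm_zero : Dm (0 : Fin n → ZMod 2) = 1 := by
  have : ∀ v : Fin n → ZMod 2, ip v (0 : Fin n → ZMod 2) = 0 := by
    intro v; simp [ip]
  simp [Dm, this]

lemma Pm_mul_Pm (a a' : Fin n → ZMod 2) : Pm a * Pm a' = Pm (a + a') := by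
  ext u v
  rw [Matrix.mul_apply]
  rw [Finset.sum_eq_single (v + a')]
  · simp only [Pm, Matrix.of_apply]
    by_cases h : u = v + (a + a')
    · simp [h, add_assoc, add_comm a a']
    · have : ¬ u = v + a' + a := by
        intro hc; exact h (by rw [hc]; rw [add_assoc, add_comm a' a])
      simp [h, this]
  · intro w _ hw
    simp only [Pm, Matrix.of_apply]
    rw [if_neg hw, mul_zero]
  · simp

lemma Pm_mul_self (a : Fin n → ZMod 2) : Pm a * Pm a = 1 := by
  rw [Pm_mul_Pm]
  have : a + a = 0 := by
    funext i; have : ∀ x : ZMod 2, x + x = 0 := by decide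
    exact this (a i)
  rw [this, Pm_zero]

lemma Dm_mul_Dm (b b' : Fin n → ZMod 2) : Dm b * Dm b' = Dm (b + b') := by
  simp only [Dm, Matrix.diagonal_mul_diagonal]
  have : (fun i => (-1 : ℂ) ^ ip i b * (-1 : ℂ) ^ ip i b')
      = fun v => (-1 : ℂ) ^ ip v (b + b') := by
    funext v
    rw [← pow_add]
    exact neg_one_pow_congr_zmod (by rw [ip_cast_add_right]; push_cast; ring)
  rw [this]

lemma Dm_mul_self (b : Fin n → ZMod 2) : Dm b * Dm b = 1 := by
  rw [Dm_mul_Dm]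
  have : b + b = 0 := by
    funext i; have : ∀ x : ZMod 2, x + x = 0 := by decide
    exact this (b i)
  rw [this, Dm_zero]

lemma diagonal_mul_Pm (d : (Fin n → ZMod 2) → ℂ) (a : Fin n → ZMod 2) :
    Matrix.diagonal d * Pm a = Pm a * Matrix.diagonal (fun v => d (v + a)) := by
  ext u v
  simp only [Matrix.diagonal_mul, Matrix.mul_diagonal, Pm, Matrix.of_apply]
  by_cases h : u = v + a
  · simp [h]
  · simp [h]

lemma Dm_mul_Pm (b a : Fin n → ZMod 2) :
    Dm b * Pm a = ((-1 : ℂ) ^ ip a b) • (Pm a * Dm b) := by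
  rw [Dm, diagonal_mul_Pm]
  have : (Matrix.diagonal fun v => (-1 : ℂ) ^ ip (v + a) b)
      = ((-1 : ℂ) ^ ip a b) • Matrix.diagonal (fun v => (-1 : ℂ) ^ ip v b) := by
    rw [← Matrix.diagonal_smul]
    have : (fun v => (-1 : ℂ) ^ ip (v + a) b)
        = (-1 : ℂ) ^ ip a b • fun v => (-1 : ℂ) ^ ip v b := by
      funext v
      rw [Pi.smul_apply, smul_eq_mul, ← pow_add]
      exact neg_one_pow_congr_zmod (by rw [ip_cast_add_left]; push_cast; ring)
    rw [this]
  rw [this, Matrix.mul_smul]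

lemma Pm_conjTranspose (a : Fin n → ZMod 2) : (Pm a)ᴴ = Pm a := by
  ext u v
  simp only [Matrix.conjTranspose_apply, Pm, Matrix.of_apply]
  have heq : (v = u + a) ↔ (u = v + a) := by
    constructor <;> intro h <;> rw [h, vadd_self]
  by_cases h : u = v + a
  · rw [if_pos h, if_pos (heq.mpr h)]; simp
  · rw [if_neg h, if_neg (fun hc => h (heq.mp hc))]; simp

lemma Dm_conjTranspose (b : Fin n → ZMod 2) : (Dm b)ᴴ = Dm b := by
  rw [Dm, Matrix.diagonal_conjTranspose]
  have : star (fun v => (-1 : ℂ) ^ ip v b) = fun v => (-1 : ℂ) ^ ip v b := by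
    funext v
    simp [Pi.star_apply]
  rw [this]

lemma vadd_self_zero (a : Fin n → ZMod 2) : a + a = 0 := by
  funext i; have : ∀ x : ZMod 2, x + x = 0 := by decide
  exact this (a i)

lemma I_pow_add_four_mul (m k : ℕ) : Complex.I ^ (m + 4 * k) = Complex.I ^ m := by
  rw [pow_add, pow_mul]
  norm_num [pow_succ, Complex.I_sq]

lemma cast_mod_four (x : ℕ) : ((x % 4 : ℕ) : ZMod 2) = (x : ZMod 2) := by
  conv_rhs => rw [← Nat.div_add_mod x 4]
  push_cast
  rw [show (4 : ZMod 2) = 0 from by decide, zero_mul, zero_add]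

lemma zmod2_add_self : ∀ x : ZMod 2, x + x = 0 := by decide

lemma pauli_scalar_one (a b : Fin n → ZMod 2) :
    ((-1 : ℂ) ^ (ip a b % 4)) * ((-1 : ℂ) ^ ip a b) = 1 := by
  rw [← pow_add]
  have : (-1 : ℂ) ^ (ip a b % 4 + ip a b) = (-1 : ℂ) ^ (0 : ℕ) := by
    apply neg_one_pow_congr_zmod
    rw [Nat.cast_add, cast_mod_four, Nat.cast_zero]
    exact zmod2_add_self _
  rw [this, pow_zero]

lemma pauli_mul (a b a' b' : Fin n → ZMod 2) :
    PauliE a b * PauliE a' b'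
      = Complex.I ^ (ip a b % 4 + ip a' b' % 4 + 2 * ip a' b + 3 * (ip (a + a') (b + b') % 4))
          • PauliE (a + a') (b + b') := by
  rw [PauliE_eq a b, PauliE_eq a' b', PauliE_eq (a + a') (b + b')]
  rw [smul_mul_assoc, mul_smul_comm, smul_smul, smul_smul]
  have key : (Pm a * Dm b) * (Pm a' * Dm b')
      = ((-1 : ℂ) ^ ip a' b) • (Pm (a + a') * Dm (b + b')) := by
    rw [mul_assoc, ← mul_assoc (Dm b), Dm_mul_Pm, smul_mul_assoc, mul_smul_comm]
    rw [mul_assoc (Pm a') (Dm b) (Dm b'), Dm_mul_Dm, ← mul_assoc, Pm_mul_Pm]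
  rw [key, smul_smul]
  congr 1
  rw [show ((-1 : ℂ) ^ ip a' b) = Complex.I ^ (2 * ip a' b) from by rw [pow_mul, Complex.I_sq]]
  rw [← pow_add, ← pow_add]
  conv_rhs => rw [← pow_add]
  rw [show ip a b % 4 + ip a' b' % 4 + 2 * ip a' b + 3 * (ip (a + a') (b + b') % 4)
        + ip (a + a') (b + b') % 4
      = (ip a b % 4 + ip a' b' % 4 + 2 * ip a' b) + 4 * (ip (a + a') (b + b') % 4) from by ring]
  rw [I_pow_add_four_mul]

lemma pauli_comm (a b a' b' : Fin n → ZMod 2) :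
    PauliE a b * PauliE a' b'
      = ((-1 : ℂ) ^ (ip a b' + ip a' b)) • (PauliE a' b' * PauliE a b) := by
  rw [pauli_mul a b a' b', pauli_mul a' b' a b, smul_smul]
  rw [show a' + a = a + a' from add_comm a' a, show b' + b = b + b' from add_comm b' b]
  congr 1
  rw [show ((-1 : ℂ) ^ (ip a b' + ip a' b)) = Complex.I ^ (2 * (ip a b' + ip a' b)) from by
    rw [pow_mul, Complex.I_sq]]
  rw [← pow_add]
  rw [show 2 * (ip a b' + ip a' b)
        + (ip a' b' % 4 + ip a b % 4 + 2 * ip a b' + 3 * (ip (a + a') (b + b') % 4))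
      = (ip a b % 4 + ip a' b' % 4 + 2 * ip a' b + 3 * (ip (a + a') (b + b') % 4))
        + 4 * ip a b' from by ring]
  rw [I_pow_add_four_mul]

lemma PauliE_zero_zero : PauliE (0 : Fin n → ZMod 2) 0 = 1 := by
  rw [PauliE_eq, ip_zero_left, Pm_zero, Dm_zero]
  simp

lemma PauliE_zero_left (b : Fin n → ZMod 2) : PauliE (0 : Fin n → ZMod 2) b = Dm b := by
  rw [PauliE_eq, ip_zero_left, Pm_zero]
  simp

lemma PauliE_hermitian (a b : Fin n → ZMod 2) : (PauliE a b)ᴴ = PauliE a b := by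
  rw [PauliE_eq, Matrix.conjTranspose_smul, Matrix.conjTranspose_mul, Pm_conjTranspose,
    Dm_conjTranspose, Dm_mul_Pm, smul_smul]
  congr 1
  rw [star_pow, show star Complex.I = -Complex.I from by simp, neg_pow]
  rw [mul_comm ((-1 : ℂ) ^ (ip a b % 4)) (Complex.I ^ (ip a b % 4)), mul_assoc,
    pauli_scalar_one, mul_one]

lemma pauli_mul_self (a b : Fin n → ZMod 2) : PauliE a b * PauliE a b = 1 := by
  rw [pauli_mul, vadd_self_zero a, vadd_self_zero b, PauliE_zero_zero, ip_zero_left]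
  rw [show ip a b % 4 + ip a b % 4 + 2 * ip a b + 3 * (0 % 4)
      = 2 * (ip a b % 4) + 2 * ip a b from by omega]
  rw [pow_add, pow_mul, pow_mul, Complex.I_sq, pauli_scalar_one, one_smul]

lemma PauliE_mem_unitary (a b : Fin n → ZMod 2) :
    PauliE a b ∈ unitary (Matrix (Fin n → ZMod 2) (Fin n → ZMod 2) ℂ) := by
  constructor <;>
    rw [Matrix.star_eq_conjTranspose, PauliE_hermitian] <;> exact pauli_mul_self a b

lemma diag_mul_Dm (d : (Fin n → ZMod 2) → ℂ) (b : Fin n → ZMod 2) :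
    Matrix.diagonal d * Dm b = Dm b * Matrix.diagonal d := by
  rw [Dm, Matrix.diagonal_mul_diagonal, Matrix.diagonal_mul_diagonal]
  refine congrArg Matrix.diagonal ?_
  funext v
  ring

lemma diag_conj_pauli (d e : (Fin n → ZMod 2) → ℂ) (a b : Fin n → ZMod 2) :
    Matrix.diagonal d * PauliE a b * Matrix.diagonal e
      = PauliE a b * Matrix.diagonal (fun v => d (v + a) * e v) := by
  ext u w
  simp only [Matrix.mul_diagonal, Matrix.diagonal_mul, PauliE, Matrix.of_apply]
  by_cases h : u = w + a
  · simp only [h, if_pos rfl]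
    ring
  · simp [h]

lemma pauli_conj_diag (a b : Fin n → ZMod 2) (d : (Fin n → ZMod 2) → ℂ) :
    PauliE a b * Matrix.diagonal d * PauliE a b = Matrix.diagonal (fun v => d (v + a)) := by
  rw [PauliE_eq]
  rw [smul_mul_assoc, mul_smul_comm, smul_mul_assoc, smul_smul]
  have key : Pm a * Dm b * Matrix.diagonal d * (Pm a * Dm b)
      = ((-1 : ℂ) ^ ip a b) • Matrix.diagonal (fun v => d (v + a)) := by
    calc Pm a * Dm b * Matrix.diagonal d * (Pm a * Dm b)
        = (Pm a * Matrix.diagonal d) * (Dm b * Pm a * Dm b) := by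
          rw [mul_assoc (Pm a) (Dm b) (Matrix.diagonal d), ← diag_mul_Dm,
            ← mul_assoc (Pm a) (Matrix.diagonal d) (Dm b),
            mul_assoc (Pm a * Matrix.diagonal d) (Dm b) (Pm a * Dm b),
            ← mul_assoc (Dm b) (Pm a) (Dm b)]
      _ = (Pm a * Matrix.diagonal d) * ((-1 : ℂ) ^ ip a b • Pm a) := by
          rw [Dm_mul_Pm, smul_mul_assoc, mul_assoc (Pm a) (Dm b) (Dm b), Dm_mul_self, mul_one]
      _ = ((-1 : ℂ) ^ ip a b) • (Pm a * Matrix.diagonal d * Pm a) := by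
          rw [mul_smul_comm, mul_assoc]
      _ = ((-1 : ℂ) ^ ip a b) • Matrix.diagonal (fun v => d (v + a)) := by
          rw [mul_assoc, diagonal_mul_Pm, ← mul_assoc, Pm_mul_self, one_mul]
  rw [key, smul_smul]
  rw [show Complex.I ^ (ip a b % 4) * Complex.I ^ (ip a b % 4) * (-1 : ℂ) ^ ip a b
      = Complex.I ^ (2 * (ip a b % 4)) * (-1 : ℂ) ^ ip a b from by rw [two_mul, pow_add]]
  rw [pow_mul, Complex.I_sq, pauli_scalar_one, one_smul]

end Helpers

section XiLemmas

lemma xi_ne_zero (ℓ : ℕ) : xi ℓ ≠ 0 := Complex.exp_ne_zero _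

lemma xi_mul_self (ℓ : ℕ) : xi (ℓ + 1) * xi (ℓ + 1) = xi ℓ := by
  rw [xi, xi, ← Complex.exp_add]
  congr 1
  have h2 : ((2 : ℂ) ^ ℓ) ≠ 0 := pow_ne_zero _ two_ne_zero
  have h2' : ((2 : ℂ) ^ (ℓ + 1)) ≠ 0 := pow_ne_zero _ two_ne_zero
  field_simp
  rw [pow_succ]
  ring

lemma xi_zpow_two_mul (ℓ : ℕ) (m : ℤ) : xi (ℓ + 1) ^ (2 * m) = xi ℓ ^ m := by
  rw [_root_.zpow_mul, show (xi (ℓ + 1)) ^ (2 : ℤ) = xi ℓ from by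
    rw [show (2 : ℤ) = ((2 : ℕ) : ℤ) from rfl, zpow_natCast, sq, xi_mul_self]]

lemma xi_one : xi 1 = -1 := by
  rw [xi, show 2 * (Real.pi : ℂ) * Complex.I / 2 ^ 1 = (Real.pi : ℂ) * Complex.I from by
    rw [pow_one]; ring]
  exact Complex.exp_pi_mul_I

lemma xi_two : xi 2 = Complex.I := by
  rw [xi, show 2 * (Real.pi : ℂ) * Complex.I / 2 ^ 2 = ((Real.pi / 2 : ℝ) : ℂ) * Complex.I from by
    push_cast; ring]
  rw [Complex.exp_mul_I]
  rw [show Complex.cos ((Real.pi / 2 : ℝ) : ℂ) = 0 from by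
    rw [← Complex.ofReal_cos, Real.cos_pi_div_two, Complex.ofReal_zero]]
  rw [show Complex.sin ((Real.pi / 2 : ℝ) : ℂ) = 1 from by
    rw [← Complex.ofReal_sin, Real.sin_pi_div_two, Complex.ofReal_one]]
  rw [one_mul, zero_add]

lemma xi_pow_pow (ℓ k : ℕ) (m : ℤ) : xi (ℓ + k) ^ ((2 ^ k : ℤ) * m) = xi ℓ ^ m := by
  induction k generalizing m with
  | zero => norm_num
  | succ k ih =>
      rw [show ℓ + (k + 1) = (ℓ + k) + 1 from rfl,
        show ((2 : ℤ) ^ (k + 1)) * m = 2 * ((2 ^ k : ℤ) * m) from by ring,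
        xi_zpow_two_mul, ih]

lemma conj_xi (ℓ : ℕ) : (starRingEnd ℂ) (xi ℓ) = (xi ℓ)⁻¹ := by
  have hkey : (starRingEnd ℂ) (2 * (Real.pi : ℂ) * Complex.I / 2 ^ ℓ)
      = -(2 * (Real.pi : ℂ) * Complex.I / 2 ^ ℓ) := by
    rw [map_div₀, _root_.map_mul, _root_.map_mul, Complex.conj_I, map_pow, Complex.conj_ofReal,
      show (starRingEnd ℂ) 2 = 2 from Complex.conj_ofNat 2]
    ring
  rw [xi, ← Complex.exp_conj, hkey, Complex.exp_neg]

lemma conj_xi_zpow (ℓ : ℕ) (m : ℤ) : (starRingEnd ℂ) (xi ℓ ^ m) = xi ℓ ^ (-m) := by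
  rw [map_zpow₀, conj_xi, _root_.inv_zpow, ← _root_.zpow_neg]

lemma xi_zpow_add (ℓ : ℕ) (p q : ℤ) : xi ℓ ^ (p + q) = xi ℓ ^ p * xi ℓ ^ q :=
  zpow_add₀ (xi_ne_zero ℓ) p q

lemma neg_one_zpow_eq (m : ℤ) (k : ℕ) (h : ((m : ℤ) : ZMod 2) = ((k : ℕ) : ZMod 2)) :
    (-1 : ℂ) ^ m = (-1 : ℂ) ^ k := by
  have h2 : (2 : ℤ) ∣ (m - k) := by
    have : ((m - k : ℤ) : ZMod 2) = 0 := by push_cast at h ⊢; rw [h]; ring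
    exact (ZMod.intCast_zmod_eq_zero_iff_dvd _ 2).mp this
  obtain ⟨t, ht⟩ := h2
  have hm : m = (k : ℤ) + 2 * t := by linarith
  rw [hm, zpow_add₀ (by norm_num : (-1 : ℂ) ≠ 0), zpow_natCast, _root_.zpow_mul,
    show ((-1 : ℂ) ^ (2 : ℤ)) = 1 from by norm_num, _root_.one_zpow, mul_one]

end XiLemmas

section QuadForm

variable {n : ℕ}

def Qf (S : Matrix (Fin n) (Fin n) ℤ) (v : Fin n → ZMod 2) : ℤ :=
  ∑ i, intVec v i * Matrix.mulVec S (intVec v) i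

lemma tauR_eq (ℓ : ℕ) (S : Matrix (Fin n) (Fin n) ℤ) :
    tauR ℓ S = Matrix.diagonal fun v => xi ℓ ^ Qf S v := rfl

lemma Qf_expand (S : Matrix (Fin n) (Fin n) ℤ) (v : Fin n → ZMod 2) :
    Qf S v = ∑ i, ∑ j, intVec v i * S i j * intVec v j := by
  refine Finset.sum_congr rfl fun i _ => ?_
  rw [Matrix.mulVec, dotProduct, Finset.mul_sum]
  exact Finset.sum_congr rfl fun j _ => by ring

def Smat (S : Matrix (Fin n) (Fin n) ℤ) (a : Fin n → ZMod 2) : Matrix (Fin n) (Fin n) ℤ :=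
  Matrix.of fun i j =>
    S i j * (2 * intVec a i * intVec a j - intVec a i - intVec a j)
      + (if i = j then (∑ k, S i k * intVec a k) * (1 - 2 * intVec a i) else 0)

lemma Smat_isSymm {S : Matrix (Fin n) (Fin n) ℤ} (hS : S.IsSymm) (a : Fin n → ZMod 2) :
    (Smat S a).IsSymm := by
  rw [Matrix.IsSymm]
  ext i j
  rw [Matrix.transpose_apply]
  show (Smat S a) j i = (Smat S a) i j
  by_cases h : i = j
  · subst h; rfl
  · simp only [Smat, Matrix.of_apply, if_neg h, if_neg (Ne.symm h), add_zero]
    rw [hS.apply i j]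
    ring

lemma intVec_sq (v : Fin n → ZMod 2) (i : Fin n) : intVec v i * intVec v i = intVec v i := by
  have : ∀ x : ZMod 2, (x.val : ℤ) * x.val = x.val := by decide
  exact this (v i)

lemma intVec_add (w a : Fin n → ZMod 2) (i : Fin n) :
    intVec (w + a) i = intVec w i + intVec a i - 2 * intVec w i * intVec a i := by
  have : ∀ x y : ZMod 2, (((x + y).val : ℤ)) = x.val + y.val - 2 * x.val * y.val := by decide
  exact this (w i) (a i)

lemma intVec_cases (v : Fin n → ZMod 2) (i : Fin n) : intVec v i = 0 ∨ intVec v i = 1 := by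
  have : ∀ x : ZMod 2, (x.val : ℤ) = 0 ∨ (x.val : ℤ) = 1 := by decide
  exact this (v i)

lemma quad_shift {S : Matrix (Fin n) (Fin n) ℤ} (hS : S.IsSymm) (a w : Fin n → ZMod 2) :
    Qf S (w + a) = Qf S w + Qf S a + 2 * Qf (Smat S a) w := by
  set G : Fin n → Fin n → ℤ := fun i j =>
    intVec a i * S i j * intVec w j - intVec w i * S i j * intVec a j
      + 2 * (intVec a i * intVec a j * S i j * intVec w i)
      - 2 * (intVec a i * intVec a j * S i j * intVec w j) with hGdef
  have key : ∀ i j, intVec (w + a) i * S i j * intVec (w + a) j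
      = intVec w i * S i j * intVec w j + intVec a i * S i j * intVec a j
        + (2 * (intVec w i * (S i j * (2 * intVec a i * intVec a j - intVec a i - intVec a j))
              * intVec w j))
        + (2 * (intVec w i * (1 - 2 * intVec a i) * (S i j * intVec a j)))
        + G i j := by
    intro i j
    simp only [hGdef]
    rw [intVec_add w a i, intVec_add w a j]
    rcases intVec_cases w i with h1 | h1 <;> rcases intVec_cases w j with h2 | h2 <;>
      rcases intVec_cases a i with h3 | h3 <;> rcases intVec_cases a j with h4 | h4 <;>
      rw [h1, h2, h3, h4] <;> ring
  have hG : (∑ i, ∑ j, G i j) = 0 := by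
    have hanti : ∀ i j, G j i = - G i j := by
      intro i j
      simp only [hGdef]
      rw [hS.apply i j, hS.apply j i]
      ring
    have hsum : (∑ i, ∑ j, G i j) = - ∑ i, ∑ j, G i j := by
      conv_lhs => rw [Finset.sum_comm]
      rw [← Finset.sum_neg_distrib]
      refine Finset.sum_congr rfl fun i _ => ?_
      rw [← Finset.sum_neg_distrib]
      exact Finset.sum_congr rfl fun j _ => hanti i j
    linarith
  have hSmatsum : Qf (Smat S a) w
      = ∑ i, ∑ j, (intVec w i * (S i j * (2 * intVec a i * intVec a j
            - intVec a i - intVec a j)) * intVec w j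
          + intVec w i * (1 - 2 * intVec a i) * (S i j * intVec a j)) := by
    rw [Qf_expand]
    refine Finset.sum_congr rfl fun i _ => ?_
    have hsplit : ∀ j, intVec w i * (Smat S a) i j * intVec w j
        = intVec w i * (S i j * (2 * intVec a i * intVec a j - intVec a i - intVec a j))
            * intVec w j
          + (if i = j then intVec w i * ((∑ k, S i k * intVec a k) * (1 - 2 * intVec a i))
              * intVec w j else 0) := by
      intro j
      by_cases h : i = j
      · simp only [Smat, Matrix.of_apply, if_pos h]; ring
      · simp only [Smat, Matrix.of_apply, if_neg h, add_zero]
    rw [Finset.sum_congr rfl fun j _ => hsplit j, Finset.sum_add_distrib,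
      Finset.sum_add_distrib]
    congr 1
    rw [Finset.sum_ite_eq Finset.univ i
      (fun j => intVec w i * ((∑ k, S i k * intVec a k) * (1 - 2 * intVec a i)) * intVec w j)]
    simp only [Finset.mem_univ, if_true]
    rw [show ∑ j, intVec w i * (1 - 2 * intVec a i) * (S i j * intVec a j)
        = intVec w i * (1 - 2 * intVec a i) * ∑ j, S i j * intVec a j from by
      rw [Finset.mul_sum]]
    linear_combination (∑ k, S i k * intVec a k) * (1 - 2 * intVec a i) * intVec_sq w i
  rw [Qf_expand S (w + a), Finset.sum_congr rfl fun i _ =>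
    Finset.sum_congr rfl fun j _ => key i j]
  simp only [Finset.sum_add_distrib]
  rw [hG, add_zero, ← Qf_expand S w, ← Qf_expand S a]
  rw [add_assoc (Qf S w + Qf S a)]
  congr 1
  rw [hSmatsum, Finset.mul_sum, ← Finset.sum_add_distrib]
  refine Finset.sum_congr rfl fun i _ => ?_
  rw [Finset.mul_sum, ← Finset.sum_add_distrib]
  refine Finset.sum_congr rfl fun j _ => ?_
  ring

lemma Qf_add_two_smul (T T' : Matrix (Fin n) (Fin n) ℤ) (v : Fin n → ZMod 2) :
    Qf (T + 2 • T') v = Qf T v + 2 * Qf T' v := by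
  simp only [Qf_expand]
  rw [Finset.mul_sum, ← Finset.sum_add_distrib]
  refine Finset.sum_congr rfl fun i _ => ?_
  rw [Finset.mul_sum, ← Finset.sum_add_distrib]
  refine Finset.sum_congr rfl fun j _ => ?_
  simp only [Matrix.add_apply, Matrix.smul_apply, smul_eq_mul]
  ring

end QuadForm


section Main

variable {n : ℕ}

lemma zmod2_valcast : ∀ x : ZMod 2, ((x.val : ℕ) : ZMod 2) = x := by decide

lemma sum_eq_diag_zmod2 (g : Fin n → Fin n → ZMod 2) (hg : ∀ i j, g i j = g j i) :
    (∑ i, ∑ j, g i j) = ∑ i, g i i := by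
  classical
  rw [← Finset.sum_product' (s := Finset.univ) (t := Finset.univ) (f := fun i j => g i j)]
  rw [← Finset.sum_filter_add_sum_filter_not (Finset.univ ×ˢ Finset.univ)
    (fun p => p.1 = p.2) (fun p => g p.1 p.2)]
  have hoff : (∑ p ∈ (Finset.univ ×ˢ Finset.univ).filter (fun p => ¬ p.1 = p.2),
      g p.1 p.2) = 0 := by
    refine Finset.sum_involution (fun p _ => (p.2, p.1)) ?_ ?_ ?_ ?_
    · intro p _
      rw [show g p.2 p.1 = g p.1 p.2 from (hg p.2 p.1)]
      exact zmod2_add_self _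
    · intro p hp _
      simp only [Finset.mem_filter] at hp
      intro hc
      have h1 : p.2 = p.1 := congrArg Prod.fst hc
      exact hp.2 h1.symm
    · intro p hp
      simp only [Finset.mem_filter, Finset.mem_product, Finset.mem_univ, true_and,
        and_true] at hp ⊢
      exact fun hc => hp (hc.symm)
    · intro p _
      rfl
  rw [hoff, add_zero]
  rw [Finset.sum_filter, Finset.sum_product]
  refine Finset.sum_congr rfl fun i _ => ?_
  simp

lemma Qf_parity {S : Matrix (Fin n) (Fin n) ℤ} (hS : S.IsSymm) (v : Fin n → ZMod 2) :
    ((Qf S v : ℤ) : ZMod 2)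
      = ((ip v (fun i => ((S i i : ℤ) : ZMod 2)) : ℕ) : ZMod 2) := by
  rw [Qf_expand, ip]
  push_cast
  have hsym : ∀ i j : Fin n, ((intVec v i : ℤ) : ZMod 2) * ((S i j : ℤ) : ZMod 2)
      * ((intVec v j : ℤ) : ZMod 2)
      = ((intVec v j : ℤ) : ZMod 2) * ((S j i : ℤ) : ZMod 2)
        * ((intVec v i : ℤ) : ZMod 2) := by
    intro i j
    rw [hS.apply i j]
    ring
  rw [sum_eq_diag_zmod2 _ hsym]
  refine Finset.sum_congr rfl fun i _ => ?_
  have h1 : ((intVec v i : ℤ) : ZMod 2) = v i := by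
    rw [intVec, Int.cast_natCast, zmod2_valcast]
  have h2 : (((((S i i : ℤ) : ZMod 2)).val : ℕ) : ZMod 2) = ((S i i : ℤ) : ZMod 2) :=
    zmod2_valcast _
  rw [h1, h2, zmod2_valcast (v i)]
  have : ∀ x y : ZMod 2, x * y * x = x * y := by decide
  exact this (v i) _

lemma tauR_one {S : Matrix (Fin n) (Fin n) ℤ} (hS : S.IsSymm) :
    tauR 1 S = PauliE 0 (fun i => ((S i i : ℤ) : ZMod 2)) := by
  rw [PauliE_zero_left, tauR_eq, Dm]
  refine congrArg Matrix.diagonal ?_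
  funext v
  rw [xi_one]
  exact neg_one_zpow_eq _ _ (Qf_parity hS v)

lemma tauR_conjTranspose (ℓ : ℕ) (S : Matrix (Fin n) (Fin n) ℤ) :
    (tauR ℓ S)ᴴ = Matrix.diagonal fun v => xi ℓ ^ (-(Qf S v)) := by
  rw [tauR_eq, Matrix.diagonal_conjTranspose]
  refine congrArg Matrix.diagonal ?_
  funext v
  rw [Pi.star_apply]
  exact conj_xi_zpow ℓ (Qf S v)

lemma tauR_mul_conjTranspose (ℓ : ℕ) (S : Matrix (Fin n) (Fin n) ℤ) :
    tauR ℓ S * (tauR ℓ S)ᴴ = 1 := by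
  rw [tauR_conjTranspose, tauR_eq, Matrix.diagonal_mul_diagonal]
  rw [show (fun v => xi ℓ ^ Qf S v * xi ℓ ^ (-(Qf S v))) = fun _ => (1 : ℂ) from by
    funext v; rw [← xi_zpow_add, add_neg_cancel, zpow_zero]]
  exact Matrix.diagonal_one

lemma tauR_conjTranspose_mul (ℓ : ℕ) (S : Matrix (Fin n) (Fin n) ℤ) :
    (tauR ℓ S)ᴴ * tauR ℓ S = 1 := by
  rw [tauR_conjTranspose, tauR_eq, Matrix.diagonal_mul_diagonal]
  rw [show (fun v => xi ℓ ^ (-(Qf S v)) * xi ℓ ^ Qf S v) = fun _ => (1 : ℂ) from by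
    funext v; rw [← xi_zpow_add, neg_add_cancel, zpow_zero]]
  exact Matrix.diagonal_one

lemma tauR_mem_unitary (ℓ : ℕ) (S : Matrix (Fin n) (Fin n) ℤ) :
    tauR ℓ S ∈ unitary (Matrix (Fin n → ZMod 2) (Fin n → ZMod 2) ℂ) := by
  constructor
  · rw [Matrix.star_eq_conjTranspose]; exact tauR_conjTranspose_mul ℓ S
  · rw [Matrix.star_eq_conjTranspose]; exact tauR_mul_conjTranspose ℓ S

lemma smul_mem_unitary {z : ℂ} (hz : (starRingEnd ℂ) z * z = 1)
    {U : Matrix (Fin n → ZMod 2) (Fin n → ZMod 2) ℂ}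
    (hU : U ∈ unitary (Matrix (Fin n → ZMod 2) (Fin n → ZMod 2) ℂ)) :
    z • U ∈ unitary (Matrix (Fin n → ZMod 2) (Fin n → ZMod 2) ℂ) := by
  constructor
  · rw [star_smul, smul_mul_assoc, mul_smul_comm, smul_smul]
    rw [show (star z * z) = 1 from hz, one_smul]
    exact hU.1
  · rw [star_smul, smul_mul_assoc, mul_smul_comm, smul_smul]
    rw [show (z * star z) = 1 from by rw [mul_comm]; exact hz, one_smul]
    exact hU.2

lemma I_zpow_fin4 (m : ℤ) : ∃ κ : Fin 4, Complex.I ^ m = Complex.I ^ ((κ : Fin 4) : ℕ) := by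
  have hmod : 0 ≤ m % 4 := Int.emod_nonneg m (by norm_num)
  have hlt : m % 4 < 4 := Int.emod_lt_of_pos m (by norm_num)
  refine ⟨⟨(m % 4).toNat, by omega⟩, ?_⟩
  have hI4 : (Complex.I : ℂ) ^ (4 : ℤ) = 1 := by
    rw [show (4 : ℤ) = ((4 : ℕ) : ℤ) from rfl, zpow_natCast,
      show (4 : ℕ) = 2 * 2 from rfl, pow_mul, Complex.I_sq, neg_one_sq]
  conv_lhs => rw [show m = 4 * (m / 4) + m % 4 from (Int.mul_ediv_add_emod m 4).symm]
  rw [zpow_add₀ Complex.I_ne_zero, _root_.zpow_mul, hI4, _root_.one_zpow, one_mul]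
  conv_lhs => rw [show (m % 4) = (((m % 4).toNat : ℕ) : ℤ) from by omega]
  rw [zpow_natCast]

lemma tau_conj_pauli (ℓ : ℕ) {S : Matrix (Fin n) (Fin n) ℤ} (hS : S.IsSymm)
    (a b : Fin n → ZMod 2) :
    tauR (ℓ + 1) S * PauliE a b * (tauR (ℓ + 1) S)ᴴ
      = xi (ℓ + 1) ^ (Qf S a) • (PauliE a b * tauR ℓ (Smat S a)) := by
  rw [tauR_conjTranspose, tauR_eq, diag_conj_pauli, ← mul_smul_comm]
  congr 1
  rw [tauR_eq, ← Matrix.diagonal_smul]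
  refine congrArg Matrix.diagonal ?_
  funext v
  rw [Pi.smul_apply, smul_eq_mul, ← xi_zpow_add]
  rw [show Qf S (v + a) + -(Qf S v) = Qf S a + 2 * Qf (Smat S a) v from by
    have := quad_shift hS a v; omega]
  rw [xi_zpow_add, xi_zpow_two_mul]

lemma pauli_conj_tau (ℓ : ℕ) {T : Matrix (Fin n) (Fin n) ℤ} (hT : T.IsSymm)
    (a b : Fin n → ZMod 2) :
    PauliE a b * tauR ℓ T * PauliE a b
      = xi ℓ ^ (Qf T a) • tauR ℓ (T + 2 • Smat T a) := by
  rw [tauR_eq, pauli_conj_diag, tauR_eq, ← Matrix.diagonal_smul]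
  refine congrArg Matrix.diagonal ?_
  funext v
  rw [Pi.smul_apply, smul_eq_mul, ← xi_zpow_add, Qf_add_two_smul]
  rw [show Qf T (v + a) = Qf T a + (Qf T v + 2 * Qf (Smat T a) v) from by
    have := quad_shift hT a v; omega]

lemma isSymm_add_two_smul {T T' : Matrix (Fin n) (Fin n) ℤ} (hT : T.IsSymm)
    (hT' : T'.IsSymm) : (T + 2 • T').IsSymm := by
  rw [Matrix.IsSymm, Matrix.transpose_add, Matrix.transpose_smul]
  rw [show Tᵀ = T from hT, show T'ᵀ = T' from hT']

lemma main_lemma (n : ℕ) : ∀ ℓ : ℕ, ∀ S : Matrix (Fin n) (Fin n) ℤ, S.IsSymm →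
    ∀ (a b : Fin n → ZMod 2) (m : ℤ),
    (xi (ℓ + 2) ^ m) • (PauliE a b * tauR (ℓ + 1) S) ∈ CliffLevel n (ℓ + 1) := by
  intro ℓ
  induction ℓ with
  | zero =>
      intro S hS a b m
      rw [show (0 + 2 : ℕ) = 2 from rfl, show (0 + 1 : ℕ) = 1 from rfl, xi_two]
      rw [tauR_one hS, pauli_mul a b 0 (fun i => ((S i i : ℤ) : ZMod 2)), smul_smul]
      rw [show Complex.I ^ (ip a b % 4 + ip (0 : Fin n → ZMod 2)
            (fun i => ((S i i : ℤ) : ZMod 2)) % 4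
          + 2 * ip (0 : Fin n → ZMod 2) b
          + 3 * (ip (a + 0) (b + fun i => ((S i i : ℤ) : ZMod 2)) % 4))
        = Complex.I ^ ((ip a b % 4 + ip (0 : Fin n → ZMod 2)
            (fun i => ((S i i : ℤ) : ZMod 2)) % 4
          + 2 * ip (0 : Fin n → ZMod 2) b
          + 3 * (ip (a + 0) (b + fun i => ((S i i : ℤ) : ZMod 2)) % 4) : ℕ) : ℤ) from by
        rw [zpow_natCast]]
      rw [← zpow_add₀ Complex.I_ne_zero]
      obtain ⟨κ, hκ⟩ := I_zpow_fin4 (m + _)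
      rw [hκ]
      show _ ∈ CliffLevel n 1
      refine ⟨κ, a + 0, b + fun i => ((S i i : ℤ) : ZMod 2), rfl⟩
  | succ ℓ ih =>
      intro S hS a b m
      show _ ∈ CliffLevel n (ℓ + 2)
      have hT' : ∀ a' : Fin n → ZMod 2, (Smat S a').IsSymm := fun a' => Smat_isSymm hS a'
      constructor
      · refine smul_mem_unitary ?_ ?_
        · rw [conj_xi_zpow, ← xi_zpow_add, neg_add_cancel, zpow_zero]
        · exact mul_mem (PauliE_mem_unitary a b) (tauR_mem_unitary _ S)
      · intro a' b'
        have hT2 : (Smat S a' + 2 • Smat (Smat S a') a).IsSymm :=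
          isSymm_add_two_smul (hT' a') (Smat_isSymm (hT' a') a)
        have hconj :
            (xi (ℓ + 1 + 2) ^ m • (PauliE a b * tauR (ℓ + 1 + 1) S)) * PauliE a' b' *
              (xi (ℓ + 1 + 2) ^ m • (PauliE a b * tauR (ℓ + 1 + 1) S))ᴴ
            = (xi (ℓ + 2) ^ (Qf S a' + ((2 ^ (ℓ + 1) : ℤ) * ((ip a b' : ℤ) + (ip a' b : ℤ))
                + 2 * Qf (Smat S a') a)))
                • (PauliE a' b' * tauR (ℓ + 1) (Smat S a' + 2 • Smat (Smat S a') a)) := by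
          rw [Matrix.conjTranspose_smul, Matrix.conjTranspose_mul, PauliE_hermitian]
          rw [smul_mul_assoc, smul_mul_assoc, mul_smul_comm, smul_smul]
          rw [show star (xi (ℓ + 1 + 2) ^ m) = xi (ℓ + 1 + 2) ^ (-m) from conj_xi_zpow _ m]
          rw [show xi (ℓ + 1 + 2) ^ m * xi (ℓ + 1 + 2) ^ (-m) = 1 from by
            rw [← xi_zpow_add, add_neg_cancel, zpow_zero], one_smul]
          rw [mul_assoc (PauliE a b) (tauR (ℓ + 1 + 1) S) (PauliE a' b'),
            mul_assoc (PauliE a b) (tauR (ℓ + 1 + 1) S * PauliE a' b'),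
            ← mul_assoc (tauR (ℓ + 1 + 1) S * PauliE a' b') ((tauR (ℓ + 1 + 1) S)ᴴ)
              (PauliE a b)]
          rw [tau_conj_pauli (ℓ + 1) hS a' b']
          rw [smul_mul_assoc, mul_smul_comm]
          rw [show PauliE a' b' * tauR (ℓ + 1) (Smat S a') * PauliE a b
              = PauliE a' b' * (tauR (ℓ + 1) (Smat S a') * PauliE a b) from
            mul_assoc _ _ _]
          rw [← mul_assoc (PauliE a b) (PauliE a' b')
            (tauR (ℓ + 1) (Smat S a') * PauliE a b)]
          rw [pauli_comm a b a' b', smul_mul_assoc, smul_smul]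
          rw [mul_assoc (PauliE a' b') (PauliE a b)
            (tauR (ℓ + 1) (Smat S a') * PauliE a b)]
          rw [← mul_assoc (PauliE a b) (tauR (ℓ + 1) (Smat S a')) (PauliE a b)]
          rw [pauli_conj_tau (ℓ + 1) (hT' a') a b]
          rw [mul_smul_comm, smul_smul]
          congr 1
          rw [show ((-1 : ℂ) ^ (ip a b' + ip a' b))
              = xi (ℓ + 2) ^ ((2 ^ (ℓ + 1) : ℤ) * ((ip a b' : ℤ) + (ip a' b : ℤ))) from by
            rw [show ℓ + 2 = 1 + (ℓ + 1) from by omega,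
              show ((ip a b' : ℤ) + (ip a' b : ℤ)) = ((ip a b' + ip a' b : ℕ) : ℤ) from by
                push_cast; ring,
              xi_pow_pow 1 (ℓ + 1) ((ip a b' + ip a' b : ℕ) : ℤ), xi_one, zpow_natCast]]
          rw [show xi (ℓ + 1) ^ (Qf (Smat S a') a)
              = xi (ℓ + 2) ^ (2 * Qf (Smat S a') a) from
            (xi_zpow_two_mul (ℓ + 1) (Qf (Smat S a') a)).symm]
          rw [← xi_zpow_add, ← xi_zpow_add]
          congr 1
          ring
        rw [hconj]
        exact ih _ hT2 a' b' _

end Main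


/-- Every QFD gate `τ_R^{(ℓ)}` (for symmetric integer `R`) lies in the `ℓ`-th level
of the Clifford hierarchy. -/
theorem qfd_in_clifford_hierarchy (n : ℕ) (hn : 1 ≤ n) (ℓ : ℕ) (hℓ : 1 ≤ ℓ)
    (R : Matrix (Fin n) (Fin n) ℤ) (hR : R.IsSymm) :
    tauR ℓ R ∈ CliffLevel n ℓ := by
  obtain ⟨k, rfl⟩ : ∃ k, ℓ = k + 1 := ⟨ℓ - 1, by omega⟩
  have h := main_lemma n k R hR 0 0 0
  rw [zpow_zero, one_smul, PauliE_zero_zero, one_mul] at h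
  exact h

end
end

section
/- Fix n ≥ 1 and ℓ ≥ 1, and let R₁, R₂ ∈ ℤ^{n×n} be symmetric. Then: (i) τ_{R₁}^{(ℓ)} · τ_{R₂}^{(ℓ)} = τ_{R₁+R₂}^{(ℓ)}; and (ii) τ_{R₁}^{(ℓ)} = τ_{R₂}^{(ℓ)} if and only if every diagonal entry of R₁ is congruent to the corresponding diagonal entry of R₂ modulo 2^ℓ and every off-diagonal entry of R₁ is congruent to the corresponding off-diagonal entry of R₂ modulo 2^{ℓ−1}. Consequently, the map R ↦ τ_R^{(ℓ)} is an isomorphism from the additive group of symmetric n × n matrices with diagonal entries in ℤ_{2^ℓ} and off-diagonal entries in ℤ_{2^{ℓ−1}} onto the multiplicative group of all n-qubit QFD gates of level ℓ. -/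
open Matrix

noncomputable section

lemma xi_zpow (ℓ : ℕ) (m : ℤ) :
    xi ℓ ^ m = Complex.exp (m * (2 * (Real.pi : ℂ) * Complex.I / (2 ^ ℓ))) := by
  rw [xi, ← Complex.exp_int_mul]

lemma xi_zpow_eq_one_iff (ℓ : ℕ) (m : ℤ) : xi ℓ ^ m = 1 ↔ ((2 : ℤ) ^ ℓ) ∣ m := by
  rw [xi_zpow, Complex.exp_eq_one_iff]
  have h2 : (2 : ℂ) * (Real.pi : ℂ) * Complex.I ≠ 0 := by
    simp [Real.pi_ne_zero, Complex.I_ne_zero, Complex.ext_iff]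
  have hp : ((2 : ℂ) ^ ℓ) ≠ 0 := pow_ne_zero _ two_ne_zero
  constructor
  · rintro ⟨k, hk⟩
    refine ⟨k, ?_⟩
    have : (m : ℂ) = k * 2 ^ ℓ := by
      field_simp at hk
      have := mul_right_cancel₀ h2 (by linear_combination (2 * (Real.pi : ℂ) * Complex.I) * hk :
        (m : ℂ) * (2 * (Real.pi : ℂ) * Complex.I) = (k * 2 ^ ℓ) * (2 * (Real.pi : ℂ) * Complex.I))
      exact this
    have h3 : ((2 ^ ℓ * k : ℤ) : ℂ) = (m : ℂ) := by push_cast; linear_combination -this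
    exact_mod_cast h3.symm
  · rintro ⟨k, hk⟩
    refine ⟨k, ?_⟩
    have : (m : ℂ) = 2 ^ ℓ * k := by exact_mod_cast hk
    field_simp [this]
    linear_combination this

lemma xi_zpow_eq_iff (ℓ : ℕ) (a b : ℤ) : xi ℓ ^ a = xi ℓ ^ b ↔ ((2 : ℤ) ^ ℓ) ∣ a - b := by
  rw [← xi_zpow_eq_one_iff ℓ (a - b), zpow_sub₀ (xi_ne_zero ℓ), div_eq_one_iff_eq
    (zpow_ne_zero _ (xi_ne_zero ℓ))]

/-- Bilinear form attached to `R`. -/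
def Bform {n : ℕ} (R : Matrix (Fin n) (Fin n) ℤ) (u w : Fin n → ℤ) : ℤ :=
  ∑ i, ∑ j, u i * R i j * w j

lemma Q_eq_B {n : ℕ} (R : Matrix (Fin n) (Fin n) ℤ) (v : Fin n → ZMod 2) :
    (∑ i, intVec v i * Matrix.mulVec R (intVec v) i) = Bform R (intVec v) (intVec v) := by
  simp [Bform, Matrix.mulVec, dotProduct, Finset.mul_sum, mul_assoc]

lemma B_sub {n : ℕ} (R₁ R₂ : Matrix (Fin n) (Fin n) ℤ) (u w : Fin n → ℤ) :
    Bform (R₁ - R₂) u w = Bform R₁ u w - Bform R₂ u w := by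
  simp [Bform, Matrix.sub_apply, mul_sub, sub_mul, Finset.sum_sub_distrib]

lemma B_add {n : ℕ} (R₁ R₂ : Matrix (Fin n) (Fin n) ℤ) (u w : Fin n → ℤ) :
    Bform (R₁ + R₂) u w = Bform R₁ u w + Bform R₂ u w := by
  simp [Bform, Matrix.add_apply, mul_add, add_mul, Finset.sum_add_distrib]

/-- Standard basis vector over ℤ. -/
def ee {n : ℕ} (i : Fin n) : Fin n → ℤ := fun k => if k = i then 1 else 0

lemma B_ee {n : ℕ} (R : Matrix (Fin n) (Fin n) ℤ) (i j : Fin n) :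
    Bform R (ee i) (ee j) = R i j := by
  simp [Bform, ee, ite_mul, mul_ite]

lemma B_ee_pair {n : ℕ} (R : Matrix (Fin n) (Fin n) ℤ) (i j : Fin n) :
    Bform R (ee i + ee j) (ee i + ee j) = R i i + R i j + R j i + R j j := by
  simp only [Bform, ee, Pi.add_apply]
  simp [ite_mul, mul_ite, add_mul, mul_add, Finset.sum_add_distrib]
  ring

lemma double_sum_symm {n : ℕ} (g : Fin n → Fin n → ℤ) (hg : ∀ i j, g i j = g j i) :
    ∑ i, ∑ j, g i j = (∑ i, g i i) + 2 * ∑ i, ∑ j ∈ Finset.Iio i, g i j := by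
  have herase : ∀ i : Fin n, (Finset.univ.erase i) = Finset.Iio i ∪ Finset.Ioi i := by
    intro i; ext j
    simp only [Finset.mem_erase, Finset.mem_union, Finset.mem_Iio, Finset.mem_Ioi,
      Finset.mem_univ, and_true]
    exact ⟨fun h => h.lt_or_gt, fun h => h.elim (fun h => h.ne) (fun h => h.ne')⟩
  have hdisj : ∀ i : Fin n, Disjoint (Finset.Iio i) (Finset.Ioi i) := by
    intro i
    simp [Finset.disjoint_left]
    intro j hj; exact le_of_lt hj
  have hswap : ∑ i, ∑ j ∈ Finset.Ioi i, g i j = ∑ i, ∑ j ∈ Finset.Iio i, g i j := by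
    rw [Finset.sum_comm' (t' := Finset.univ) (s' := fun j => Finset.Iio j)]
    · exact Finset.sum_congr rfl fun i _ => Finset.sum_congr rfl fun j _ => hg j i
    · intro x y; simp [Finset.mem_Ioi, Finset.mem_Iio]
  calc ∑ i, ∑ j, g i j
      = ∑ i : Fin n, (g i i + ∑ j ∈ Finset.univ.erase i, g i j) := by
        refine Finset.sum_congr rfl fun i _ => ?_
        rw [Finset.add_sum_erase _ _ (Finset.mem_univ i)]
    _ = (∑ i, g i i) + ∑ i : Fin n, (∑ j ∈ Finset.Iio i, g i j + ∑ j ∈ Finset.Ioi i, g i j) := by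
        rw [Finset.sum_add_distrib]
        congr 1
        refine Finset.sum_congr rfl fun i _ => ?_
        rw [herase i, Finset.sum_union (hdisj i)]
    _ = (∑ i, g i i) + 2 * ∑ i, ∑ j ∈ Finset.Iio i, g i j := by
        rw [Finset.sum_add_distrib, hswap]; ring

lemma pow_split {ℓ : ℕ} (hℓ : 1 ≤ ℓ) : (2 : ℤ) ^ ℓ = 2 * 2 ^ (ℓ - 1) := by
  conv_lhs => rw [← Nat.succ_pred_eq_of_pos hℓ]
  rw [pow_succ, Nat.pred_eq_sub_one]; ring

lemma B_dvd {n ℓ : ℕ} (hℓ : 1 ≤ ℓ) (R : Matrix (Fin n) (Fin n) ℤ) (hR : R.IsSymm)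
    (hd : ∀ i, ((2 : ℤ) ^ ℓ) ∣ R i i)
    (ho : ∀ i j, i ≠ j → ((2 : ℤ) ^ (ℓ - 1)) ∣ R i j) (u : Fin n → ℤ) :
    ((2 : ℤ) ^ ℓ) ∣ Bform R u u := by
  have hsym : ∀ i j, u i * R i j * u j = u j * R j i * u i := by
    intro i j; rw [hR.apply i j]; ring
  rw [Bform, double_sum_symm _ hsym]
  refine dvd_add (Finset.dvd_sum fun i _ => ((hd i).mul_left _).mul_right _) ?_
  rw [pow_split hℓ]
  refine mul_dvd_mul_left 2 (Finset.dvd_sum fun i _ => Finset.dvd_sum fun j hj => ?_)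
  have : j ≠ i := (Finset.mem_Iio.mp hj).ne
  exact ((ho i j this.symm).mul_left _).mul_right _

lemma intVec_single {n : ℕ} (i : Fin n) : intVec (Pi.single i 1) = ee i := by
  funext k
  simp only [intVec, ee, Pi.single_apply]
  by_cases hi : k = i
  · rw [if_pos hi, if_pos hi]; decide
  · rw [if_neg hi, if_neg hi]; decide

lemma intVec_pair {n : ℕ} {i j : Fin n} (h : i ≠ j) :
    intVec (Pi.single i 1 + Pi.single j 1) = ee i + ee j := by
  funext k
  simp only [intVec, Pi.add_apply, Pi.single_apply, ee]
  by_cases hi : k = i <;> by_cases hj : k = j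
  · exact absurd (hi.symm.trans hj) h
  · rw [if_pos hi, if_neg hj, if_pos hi, if_neg hj]; decide
  · rw [if_neg hi, if_pos hj, if_neg hi, if_pos hj]; decide
  · rw [if_neg hi, if_neg hj, if_neg hi, if_neg hj]; decide

lemma tau_eq_iff' {n ℓ : ℕ} (R₁ R₂ : Matrix (Fin n) (Fin n) ℤ) :
    tauR ℓ R₁ = tauR ℓ R₂ ↔
      ∀ v : Fin n → ZMod 2, ((2 : ℤ) ^ ℓ) ∣ Bform (R₁ - R₂) (intVec v) (intVec v) := by
  rw [tauR, tauR, Matrix.diagonal_eq_diagonal_iff]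
  refine forall_congr' fun v => ?_
  rw [Q_eq_B, Q_eq_B, xi_zpow_eq_iff, B_sub]

/-- Part (ii) as a standalone lemma. -/
lemma tau_eq_iff_modeq {n ℓ : ℕ} (hℓ : 1 ≤ ℓ) (R₁ R₂ : Matrix (Fin n) (Fin n) ℤ)
    (h1 : R₁.IsSymm) (h2 : R₂.IsSymm) :
    tauR ℓ R₁ = tauR ℓ R₂ ↔
      (∀ i, Int.ModEq (2 ^ ℓ) (R₁ i i) (R₂ i i)) ∧
      (∀ i j, i ≠ j → Int.ModEq (2 ^ (ℓ - 1)) (R₁ i j) (R₂ i j)) := by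
  rw [tau_eq_iff']
  set D := R₁ - R₂ with hD
  have hDsymm : D.IsSymm := h1.sub h2
  constructor
  · intro h
    have hdiag : ∀ i, ((2 : ℤ) ^ ℓ) ∣ D i i := by
      intro i
      have := h (Pi.single i 1)
      rwa [intVec_single, B_ee] at this
    refine ⟨fun i => ?_, fun i j hij => ?_⟩
    · have := hdiag i
      rw [hD, Matrix.sub_apply] at this
      exact Int.modEq_iff_dvd.mpr (dvd_sub_comm.mp this)
    · have hpair := h (Pi.single i 1 + Pi.single j 1)
      rw [intVec_pair hij, B_ee_pair] at hpair
      have hji : D j i = D i j := hDsymm.apply i j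
      have h2d : ((2 : ℤ) ^ ℓ) ∣ 2 * D i j := by
        have : 2 * D i j = (D i i + D i j + D j i + D j j) - D i i - D j j := by
          rw [hji]; ring
        rw [this]
        exact dvd_sub (dvd_sub hpair (hdiag i)) (hdiag j)
      have hdij : ((2 : ℤ) ^ (ℓ - 1)) ∣ D i j := by
        rw [pow_split hℓ] at h2d
        exact (mul_dvd_mul_iff_left (by norm_num : (2:ℤ) ≠ 0)).mp h2d
      rw [hD, Matrix.sub_apply] at hdij
      exact Int.modEq_iff_dvd.mpr (dvd_sub_comm.mp hdij)
  · rintro ⟨hdiag, hoff⟩ v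
    refine B_dvd hℓ D hDsymm (fun i => ?_) (fun i j hij => ?_) _
    · rw [hD, Matrix.sub_apply]
      exact dvd_sub_comm.mp (Int.ModEq.dvd (hdiag i))
    · rw [hD, Matrix.sub_apply]
      exact dvd_sub_comm.mp (Int.ModEq.dvd (hoff i j hij))

lemma eq_of_modEq_of_bounds {m a b : ℤ} (h : Int.ModEq m a b)
    (ha0 : 0 ≤ a) (ham : a < m) (hb0 : 0 ≤ b) (hbm : b < m) : a = b := by
  have h' : a % m = b % m := h
  rwa [Int.emod_eq_of_lt ha0 ham, Int.emod_eq_of_lt hb0 hbm] at h'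

/-- (i) QFD gates multiply by adding their symmetric matrices; (ii) two QFD gates of
level `ℓ` coincide iff their matrices agree on the diagonal mod `2^ℓ` and off the
diagonal mod `2^{ℓ−1}`; consequently (iii) each QFD gate has a unique symmetric
representative with diagonal entries in `[0, 2^ℓ)` and off-diagonal entries in
`[0, 2^{ℓ−1})`, so `R ↦ τ_R^{(ℓ)}` is an isomorphism from the additive group of such
matrices onto the multiplicative group of level-`ℓ` QFD gates. -/
theorem qfd_isomorphism (n ℓ : ℕ) (hn : 1 ≤ n) (hℓ : 1 ≤ ℓ) :
    (∀ R₁ R₂ : Matrix (Fin n) (Fin n) ℤ, R₁.IsSymm → R₂.IsSymm →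
      tauR ℓ R₁ * tauR ℓ R₂ = tauR ℓ (R₁ + R₂)) ∧
    (∀ R₁ R₂ : Matrix (Fin n) (Fin n) ℤ, R₁.IsSymm → R₂.IsSymm →
      (tauR ℓ R₁ = tauR ℓ R₂ ↔
        (∀ i, Int.ModEq (2 ^ ℓ) (R₁ i i) (R₂ i i)) ∧
        (∀ i j, i ≠ j → Int.ModEq (2 ^ (ℓ - 1)) (R₁ i j) (R₂ i j)))) ∧
    (∀ M : Matrix (Fin n → ZMod 2) (Fin n → ZMod 2) ℂ,
      (∃ R : Matrix (Fin n) (Fin n) ℤ, R.IsSymm ∧ M = tauR ℓ R) →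
      ∃! R : Matrix (Fin n) (Fin n) ℤ,
        R.IsSymm ∧ (∀ i, 0 ≤ R i i ∧ R i i < 2 ^ ℓ) ∧
        (∀ i j, i ≠ j → 0 ≤ R i j ∧ R i j < 2 ^ (ℓ - 1)) ∧ M = tauR ℓ R) := by
  have hℓpos : (0 : ℤ) < 2 ^ ℓ := by positivity
  have hℓ1pos : (0 : ℤ) < 2 ^ (ℓ - 1) := by positivity
  refine ⟨?_, fun R₁ R₂ h1 h2 => tau_eq_iff_modeq hℓ R₁ R₂ h1 h2, ?_⟩
  · intro R₁ R₂ _ _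
    rw [tauR, tauR, tauR, Matrix.diagonal_mul_diagonal]
    refine Matrix.diagonal_eq_diagonal_iff.mpr fun v => ?_
    rw [← zpow_add₀ (xi_ne_zero ℓ)]
    congr 1
    rw [Q_eq_B, Q_eq_B, Q_eq_B, B_add]
  · rintro M ⟨R, hR, hM⟩
    set R₀ : Matrix (Fin n) (Fin n) ℤ :=
      Matrix.of fun i j => if i = j then R i i % 2 ^ ℓ else R i j % 2 ^ (ℓ - 1) with hR₀
    have hR₀app : ∀ i j, R₀ i j = if i = j then R i i % 2 ^ ℓ else R i j % 2 ^ (ℓ - 1) :=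
      fun i j => rfl
    have hR₀symm : R₀.IsSymm := by
      refine Matrix.IsSymm.ext fun i j => ?_
      rw [hR₀app, hR₀app]
      by_cases h : i = j
      · subst h; simp
      · rw [if_neg (Ne.symm h), if_neg h, hR.apply i j]
    have hR₀diag : ∀ i, 0 ≤ R₀ i i ∧ R₀ i i < 2 ^ ℓ := by
      intro i
      rw [hR₀app, if_pos rfl]
      exact ⟨Int.emod_nonneg _ hℓpos.ne', Int.emod_lt_of_pos _ hℓpos⟩
    have hR₀off : ∀ i j, i ≠ j → 0 ≤ R₀ i j ∧ R₀ i j < 2 ^ (ℓ - 1) := by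
      intro i j hij
      rw [hR₀app, if_neg hij]
      exact ⟨Int.emod_nonneg _ hℓ1pos.ne', Int.emod_lt_of_pos _ hℓ1pos⟩
    have hMod : ∀ (S : Matrix (Fin n) (Fin n) ℤ), tauR ℓ R = tauR ℓ R₀ := by
      intro _
      refine (tau_eq_iff_modeq hℓ R R₀ hR hR₀symm).mpr ⟨fun i => ?_, fun i j hij => ?_⟩
      · rw [hR₀app, if_pos rfl]
        exact (Int.emod_emod_of_dvd _ dvd_rfl).symm
      · rw [hR₀app, if_neg hij]
        exact (Int.emod_emod_of_dvd _ dvd_rfl).symm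
    have hMR₀ : M = tauR ℓ R₀ := by rw [hM]; exact hMod R
    refine ⟨R₀, ⟨hR₀symm, hR₀diag, hR₀off, hMR₀⟩, ?_⟩
    rintro R' ⟨hs', hd', ho', hM'⟩
    have htau : tauR ℓ R' = tauR ℓ R₀ := by rw [← hM', hMR₀]
    obtain ⟨hcd, hco⟩ := (tau_eq_iff_modeq hℓ R' R₀ hs' hR₀symm).mp htau
    ext i j
    by_cases h : i = j
    · subst h
      exact eq_of_modEq_of_bounds (hcd i) (hd' i).1 (hd' i).2 (hR₀diag i).1 (hR₀diag i).2
    · exact eq_of_modEq_of_bounds (hco i j h) (ho' i j h).1 (ho' i j h).2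
        (hR₀off i j h).1 (hR₀off i j h).2

end
end
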